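/- Let (Ω, 𝔉, P) be a probability space. Let (a_i)_{i∈ℕ} be nonnegative integrable random variables with Σ_i E[a_i] < ∞, and for each i ∈ ℕ let (M_i(t))_{t∈[0,∞)} be nonnegative integrable random variables such that E[a_i · M_i(t)] = E[a_i] for all i and t, and such that for each i, M_i(t) → 0 almost surely as t → ∞. Then Σ_{i∈ℕ} a_i M_i(t) → 0 in probability as t → ∞, i.e. for every ε > 0, P(Σ_i a_i M_i(t) > ε) → 0 as t → ∞. -/

import Mathlib

open MeasureTheory Filter
open scoped NNReal ENNReal

set_option maxHeartbeats 1000000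

/-- If `(aᵢ)` are nonnegative integrable random variables with `Σᵢ E[aᵢ] < ∞`,
and for each `i` the nonnegative integrable family `(Mᵢ(t))_{t ≥ 0}` satisfies
`E[aᵢ Mᵢ(t)] = E[aᵢ]` and `Mᵢ(t) → 0` a.s. as `t → ∞`, then
`Σᵢ aᵢ Mᵢ(t) → 0` in probability as `t → ∞`. -/
theorem sum_tendsto_zero_in_probability {Ω : Type*} [MeasurableSpace Ω]
    (P : Measure Ω) [IsProbabilityMeasure P]
    (a : ℕ → Ω → ℝ) (ha_nn : ∀ i ω, 0 ≤ a i ω)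
    (ha_int : ∀ i, Integrable (a i) P)
    (ha_sum : Summable fun i => ∫ ω, a i ω ∂P)
    (M : ℕ → ℝ≥0 → Ω → ℝ)
    (hM_nn : ∀ i t ω, 0 ≤ M i t ω)
    (hM_int : ∀ i t, Integrable (M i t) P)
    (haM_int : ∀ i t, Integrable (fun ω => a i ω * M i t ω) P)
    (haM_mean : ∀ i t, ∫ ω, a i ω * M i t ω ∂P = ∫ ω, a i ω ∂P)
    (hM_as : ∀ i, ∀ᵐ ω ∂P, Tendsto (fun t : ℝ≥0 => M i t ω) atTop (nhds 0))
    (ε : ℝ) (hε : 0 < ε) :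
    Tendsto (fun t : ℝ≥0 =>
        P {ω | ENNReal.ofReal ε < ∑' i, ENNReal.ofReal (a i ω * M i t ω)})
      atTop (nhds 0) := by
  set L : ℕ → ℝ≥0∞ := fun i => ∫⁻ ω, ENNReal.ofReal (a i ω) ∂P with hLdef
  have hL_eq : ∀ i, L i = ENNReal.ofReal (∫ ω, a i ω ∂P) := fun i =>
    (ofReal_integral_eq_lintegral_ofReal (ha_int i)
      (Eventually.of_forall (ha_nn i))).symm ▸ rfl
  have hL_sum : ∑' i, L i ≠ ∞ := by
    simp_rw [hL_eq]
    rw [← ENNReal.ofReal_tsum_of_nonneg (fun i => integral_nonneg (ha_nn i)) ha_sum]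
    exact ENNReal.ofReal_ne_top
  have haM_meas : ∀ i t, AEMeasurable (fun ω => ENNReal.ofReal (a i ω * M i t ω)) P :=
    fun i t => ENNReal.measurable_ofReal.comp_aemeasurable
      (haM_int i t).aestronglyMeasurable.aemeasurable
  have hLM : ∀ i t, ∫⁻ ω, ENNReal.ofReal (a i ω * M i t ω) ∂P = L i := by
    intro i t
    rw [← ofReal_integral_eq_lintegral_ofReal (haM_int i t)
        (Eventually.of_forall fun ω => mul_nonneg (ha_nn i ω) (hM_nn i t ω)),
      haM_mean i t, hL_eq]
  have he2 : (0:ℝ) < ε / 2 := half_pos hε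
  have he2' : ENNReal.ofReal (ε / 2) ≠ 0 := (ENNReal.ofReal_pos.mpr he2).ne'
  rw [Filter.tendsto_iff_seq_tendsto]
  intro u hu
  rw [ENNReal.tendsto_nhds_zero]
  intro δ hδ
  set δ' : ℝ≥0∞ := min δ 1 with hδ'def
  have hδ'0 : δ' ≠ 0 := by
    simp only [hδ'def, ne_eq, min_eq_iff]
    rintro (⟨h, -⟩ | ⟨h, -⟩) <;> simp_all
  have hδ'top : δ' ≠ ∞ := ne_top_of_le_ne_top ENNReal.one_ne_top (min_le_right _ _)
  have hδ'le : δ' ≤ δ := min_le_left _ _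
  -- choose N with small tail
  set c : ℝ≥0∞ := δ' / 2 * ENNReal.ofReal (ε / 2) with hcdef
  have hc : 0 < c := by
    apply ENNReal.mul_pos _ he2'
    simp [ENNReal.div_eq_top, hδ'0]
  obtain ⟨N, hN⟩ := (ENNReal.tendsto_nhds_zero.mp
    (ENNReal.tendsto_sum_nat_add L hL_sum) c hc).exists
  -- finite part tends to zero in measure
  set F : ℕ → Ω → ℝ := fun n ω => ∑ i ∈ Finset.range N, a i ω * M i (u n) ω with hFdef
  have hF_meas : ∀ n, AEStronglyMeasurable (F n) P := fun n =>
    Finset.aestronglyMeasurable_fun_sum _ fun i _ => (haM_int i (u n)).aestronglyMeasurable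
  have hF_ae : ∀ᵐ ω ∂P, Tendsto (fun n => F n ω) atTop (nhds (0:ℝ)) := by
    filter_upwards [ae_all_iff.mpr hM_as] with ω hω
    have : Tendsto (fun n => ∑ i ∈ Finset.range N, a i ω * M i (u n) ω) atTop
        (nhds (∑ i ∈ Finset.range N, (0:ℝ))) := by
      refine tendsto_finset_sum _ fun i _ => ?_
      simpa using (((hω i).comp hu).const_mul (a i ω))
    simpa using this
  have hTIM := tendstoInMeasure_of_tendsto_ae hF_meas hF_ae
  have hfin := ENNReal.tendsto_nhds_zero.mp (tendstoInMeasure_iff_dist.mp hTIM (ε / 2) he2) (δ' / 2)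
    (ENNReal.div_pos hδ'0 ENNReal.ofNat_ne_top)
  filter_upwards [hfin] with n hn
  -- tail bound
  have htail : P {ω | ENNReal.ofReal (ε / 2) ≤
      ∑' i, ENNReal.ofReal (a (i + N) ω * M (i + N) (u n) ω)} ≤ δ' / 2 := by
    have hmeas : AEMeasurable
        (fun ω => ∑' i, ENNReal.ofReal (a (i + N) ω * M (i + N) (u n) ω)) P :=
      AEMeasurable.ennreal_tsum fun i => haM_meas (i + N) (u n)
    refine (meas_ge_le_lintegral_div hmeas he2' ENNReal.ofReal_ne_top).trans ?_
    rw [lintegral_tsum fun i => haM_meas (i + N) (u n)]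
    simp_rw [hLM]
    rw [ENNReal.div_le_iff he2' ENNReal.ofReal_ne_top]
    exact hN
  -- split the event
  have hsplit : {ω | ENNReal.ofReal ε < ∑' i, ENNReal.ofReal (a i ω * M i (u n) ω)} ⊆
      {ω | ε / 2 ≤ dist (F n ω) 0} ∪
      {ω | ENNReal.ofReal (ε / 2) ≤
        ∑' i, ENNReal.ofReal (a (i + N) ω * M (i + N) (u n) ω)} := by
    intro ω hω
    by_contra hcon
    simp only [Set.mem_union, Set.mem_setOf_eq, not_or, not_le] at hcon
    obtain ⟨h1, h2⟩ := hcon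
    rw [Real.dist_eq, sub_zero,
      abs_of_nonneg (Finset.sum_nonneg fun i _ =>
        mul_nonneg (ha_nn i ω) (hM_nn i (u n) ω))] at h1
    have hbig : (∑' i, ENNReal.ofReal (a i ω * M i (u n) ω)) < ENNReal.ofReal ε := by
      have hsplit' : (∑' i, ENNReal.ofReal (a i ω * M i (u n) ω)) =
          ∑ i ∈ Finset.range N, ENNReal.ofReal (a i ω * M i (u n) ω) +
          ∑' i, ENNReal.ofReal (a (i + N) ω * M (i + N) (u n) ω) :=
        (HasSum.sum_range_add (f := fun i => ENNReal.ofReal (a i ω * M i (u n) ω))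
          (k := N) ENNReal.summable.hasSum).tsum_eq
      rw [hsplit']
      have hA : ∑ i ∈ Finset.range N, ENNReal.ofReal (a i ω * M i (u n) ω)
          < ENNReal.ofReal (ε / 2) := by
        rw [← ENNReal.ofReal_sum_of_nonneg fun i _ =>
          mul_nonneg (ha_nn i ω) (hM_nn i (u n) ω)]
        exact (ENNReal.ofReal_lt_ofReal_iff he2).mpr h1
      calc _ < ENNReal.ofReal (ε / 2) + ENNReal.ofReal (ε / 2) :=
            ENNReal.add_lt_add hA h2
        _ = ENNReal.ofReal ε := by
            rw [← ENNReal.ofReal_add he2.le he2.le, add_halves]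
    exact lt_irrefl _ (hω.trans hbig)
  calc P {ω | ENNReal.ofReal ε < ∑' i, ENNReal.ofReal (a i ω * M i (u n) ω)}
      ≤ P {ω | ε / 2 ≤ dist (F n ω) 0} +
        P {ω | ENNReal.ofReal (ε / 2) ≤
          ∑' i, ENNReal.ofReal (a (i + N) ω * M (i + N) (u n) ω)} :=
        (measure_mono hsplit).trans (measure_union_le _ _)
    _ ≤ δ' / 2 + δ' / 2 := add_le_add hn htail
    _ = δ' := ENNReal.add_halves δ'
    _ ≤ δ := hδ'le
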